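/- For every ℓ with 0 < ℓ < 2·arsinh(1) and every s₀ ∈ [−X(ℓ), X(ℓ)], one has ρ_ℓ(s₀)^{−2}·e^{−(X(ℓ) − |s₀|)} ≤ π²·e^{−(X(ℓ) − |s₀|)/3}, where ρ_ℓ(s) = ℓ/(2π·cos(ℓ·s/(2π))) and X(ℓ) = (2π/ℓ)·(π/2 − arctan(sinh(ℓ/2))). -/

import Mathlib

set_option maxHeartbeats 800000


/-- Half-length of the hyperbolic collar around a geodesic of length `ℓ`. -/
noncomputable def collarX (ℓ : ℝ) : ℝ :=
  2 * Real.pi / ℓ * (Real.pi / 2 - Real.arctan (Real.sinh (ℓ / 2)))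

/-- Conformal factor of the hyperbolic collar. -/
noncomputable def collarRho (ℓ s : ℝ) : ℝ :=
  ℓ / (2 * Real.pi * Real.cos (ℓ * s / (2 * Real.pi)))

lemma my_sinh_le_mul_cosh {x : ℝ} (hx : 0 ≤ x) : Real.sinh x ≤ x * Real.cosh x := by
  have mono : MonotoneOn (fun x : ℝ => x * Real.cosh x - Real.sinh x) (Set.Ici 0) := by
    apply monotoneOn_of_deriv_nonneg (convex_Ici 0)
    · fun_prop
    · fun_prop
    · intro y hy
      rw [interior_Ici] at hy
      have : deriv (fun x : ℝ => x * Real.cosh x - Real.sinh x) y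
          = y * Real.sinh y := by
        rw [deriv_fun_sub (by fun_prop) (by fun_prop), deriv_fun_mul (by fun_prop) (by fun_prop)]
        simp [Real.deriv_cosh, Real.deriv_sinh]
      rw [this]
      exact mul_nonneg hy.le (Real.sinh_nonneg_iff.2 hy.le)
  have := mono (Set.self_mem_Ici) (Set.mem_Ici.2 hx) hx
  simpa using this

/-- `ρ_ℓ(s₀)⁻²·e^{-(X(ℓ)-|s₀|)} ≤ π²·e^{-(X(ℓ)-|s₀|)/3}` on the collar. -/
theorem collarRho_weight_end_bound (ℓ : ℝ) (h0 : 0 < ℓ) (h1 : ℓ < 2 * Real.arsinh 1)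
    (s₀ : ℝ) (hs₀ : s₀ ∈ Set.Icc (-(collarX ℓ)) (collarX ℓ)) :
    (collarRho ℓ s₀ ^ 2)⁻¹ * Real.exp (-(collarX ℓ - |s₀|))
      ≤ Real.pi ^ 2 * Real.exp (-(collarX ℓ - |s₀|) / 3) := by
  obtain ⟨hsl, hsr⟩ := hs₀
  have hπ : (0:ℝ) < Real.pi := Real.pi_pos
  have hπ3 : (3:ℝ) < Real.pi := Real.pi_gt_three
  set X := collarX ℓ with hXdef
  have hrX : |s₀| ≤ X := abs_le.2 ⟨by linarith, hsr⟩
  set r := |s₀| with hrdef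
  have hr0 : (0:ℝ) ≤ r := abs_nonneg _
  set t := X - r with htdef
  have ht0 : (0:ℝ) ≤ t := by simp [htdef]; linarith
  set E := Real.exp (-t / 3) with hEdef
  have hE0 : 0 < E := Real.exp_pos _
  -- the endpoint angle
  have ha : ℓ * X / (2 * Real.pi) = Real.pi / 2 - Real.arctan (Real.sinh (ℓ / 2)) := by
    rw [hXdef, collarX]
    field_simp
  have harct0 : 0 < Real.arctan (Real.sinh (ℓ / 2)) := by
    have hs : (0:ℝ) < Real.sinh (ℓ / 2) := Real.sinh_pos_iff.2 (by linarith)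
    have := Real.arctan_strictMono hs
    simpa [Real.arctan_zero] using this
  have harctπ : Real.arctan (Real.sinh (ℓ / 2)) < Real.pi / 2 :=
    Real.arctan_lt_pi_div_two _
  -- cos of the endpoint angle is tanh(ℓ/2)
  have hcosa : Real.cos (ℓ * X / (2 * Real.pi)) = Real.tanh (ℓ / 2) := by
    rw [ha, Real.cos_pi_div_two_sub, Real.sin_arctan, Real.tanh_eq_sinh_div_cosh]
    congr 1
    have h2 : (1 : ℝ) + Real.sinh (ℓ / 2) ^ 2 = Real.cosh (ℓ / 2) ^ 2 := by
      rw [Real.cosh_sq]; ring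
    rw [h2, Real.sqrt_sq (Real.cosh_pos _).le]
  have htanh0 : 0 ≤ Real.tanh (ℓ / 2) := by
    rw [Real.tanh_eq_sinh_div_cosh]
    exact div_nonneg (Real.sinh_nonneg_iff.2 (by linarith)) (Real.cosh_pos _).le
  have htanh : Real.tanh (ℓ / 2) ≤ ℓ / 2 := by
    rw [Real.tanh_eq_sinh_div_cosh, div_le_iff₀ (Real.cosh_pos _)]
    exact my_sinh_le_mul_cosh (by linarith)
  -- abbreviations for angles
  have hb0 : 0 ≤ ℓ * t / (2 * Real.pi) := by positivity
  have hsina : Real.sin (ℓ * X / (2 * Real.pi)) ≤ 1 := Real.sin_le_one _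
  have hsina0 : 0 ≤ Real.sin (ℓ * X / (2 * Real.pi)) := by
    rw [ha]
    exact Real.sin_nonneg_of_nonneg_of_le_pi (by linarith) (by linarith)
  -- cos u ≤ tanh(ℓ/2) + b
  have hbub : Real.cos (ℓ * r / (2 * Real.pi))
      ≤ Real.tanh (ℓ / 2) + ℓ * t / (2 * Real.pi) := by
    have hsplit : ℓ * r / (2 * Real.pi)
        = ℓ * X / (2 * Real.pi) - ℓ * t / (2 * Real.pi) := by
      rw [htdef]; ring
    rw [hsplit, Real.cos_sub, hcosa]
    have h1 : Real.tanh (ℓ / 2) * Real.cos (ℓ * t / (2 * Real.pi))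
        ≤ Real.tanh (ℓ / 2) := by
      nlinarith [Real.cos_le_one (ℓ * t / (2 * Real.pi))]
    have h2 : Real.sin (ℓ * X / (2 * Real.pi)) * Real.sin (ℓ * t / (2 * Real.pi))
        ≤ ℓ * t / (2 * Real.pi) := by
      have hsb : Real.sin (ℓ * t / (2 * Real.pi)) ≤ ℓ * t / (2 * Real.pi) :=
        Real.sin_le hb0
      nlinarith [Real.neg_one_le_sin (ℓ * t / (2 * Real.pi))]
    linarith
  -- cos u ≥ 0
  have hu0 : 0 ≤ ℓ * r / (2 * Real.pi) := by positivity
  have huπ : ℓ * r / (2 * Real.pi) ≤ Real.pi / 2 := by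
    have : ℓ * r / (2 * Real.pi) ≤ ℓ * X / (2 * Real.pi) := by
      gcongr
    rw [ha] at this
    linarith
  have hcosu0 : 0 ≤ Real.cos (ℓ * r / (2 * Real.pi)) :=
    Real.cos_nonneg_of_mem_Icc ⟨by linarith, huπ⟩
  -- exponential bound
  have hE1 : (1 + t / 3) * E ≤ 1 := by
    have h := Real.add_one_le_exp (t / 3)
    have : Real.exp (t / 3) * E = 1 := by
      rw [hEdef, ← Real.exp_add, show t / 3 + -t / 3 = (0:ℝ) from by ring, Real.exp_zero]
    nlinarith
  -- the key bound : cos u * E ≤ ℓ / 2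
  have hcu_le : Real.cos (ℓ * r / (2 * Real.pi)) ≤ ℓ / 2 * (1 + t / 3) := by
    have hb6 : ℓ * t / (2 * Real.pi) ≤ ℓ * t / 6 := by
      rw [div_le_div_iff₀ (by positivity) (by norm_num)]
      nlinarith [mul_nonneg h0.le ht0]
    have hexpand : ℓ / 2 * (1 + t / 3) = ℓ / 2 + ℓ * t / 6 := by ring
    linarith
  have hA : Real.cos (ℓ * r / (2 * Real.pi)) * E ≤ ℓ / 2 := by
    calc Real.cos (ℓ * r / (2 * Real.pi)) * E ≤ ℓ / 2 * (1 + t / 3) * E := by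
          exact mul_le_mul_of_nonneg_right hcu_le hE0.le
      _ = ℓ / 2 * ((1 + t / 3) * E) := by ring
      _ ≤ ℓ / 2 * 1 := by
          exact mul_le_mul_of_nonneg_left hE1 (by linarith)
      _ = ℓ / 2 := mul_one _
  -- rewrite the goal
  have hcoseq : Real.cos (ℓ * s₀ / (2 * Real.pi)) = Real.cos (ℓ * r / (2 * Real.pi)) := by
    rw [← Real.cos_abs (ℓ * s₀ / (2 * Real.pi))]
    congr 1
    rw [abs_div, abs_mul, abs_of_pos h0, abs_of_pos (by positivity : (0:ℝ) < 2 * Real.pi)]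
  have hrho : (collarRho ℓ s₀ ^ 2)⁻¹
      = (2 * Real.pi * Real.cos (ℓ * r / (2 * Real.pi)) / ℓ) ^ 2 := by
    rw [collarRho, hcoseq, ← inv_pow, inv_div]
  have hexp3 : Real.exp (-t) = E ^ 2 * E := by
    rw [hEdef, show (-t) = -t / 3 + (-t / 3 + -t / 3) from by ring,
      Real.exp_add, Real.exp_add]
    ring
  have hgoal_lhs : (collarRho ℓ s₀ ^ 2)⁻¹ * Real.exp (-t)
      = (2 * Real.pi * Real.cos (ℓ * r / (2 * Real.pi)) / ℓ * E) ^ 2 * E := by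
    rw [hrho, hexp3]; ring
  have hsq : (2 * Real.pi * Real.cos (ℓ * r / (2 * Real.pi)) / ℓ * E) ^ 2
      ≤ Real.pi ^ 2 := by
    have hnn : 0 ≤ 2 * Real.pi * Real.cos (ℓ * r / (2 * Real.pi)) / ℓ * E := by
      positivity
    have hle : 2 * Real.pi * Real.cos (ℓ * r / (2 * Real.pi)) / ℓ * E ≤ Real.pi := by
      rw [div_mul_eq_mul_div, div_le_iff₀ h0]
      nlinarith [mul_le_mul_of_nonneg_left hA (by linarith : (0:ℝ) ≤ 2 * Real.pi)]
    exact pow_le_pow_left₀ hnn hle 2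
  calc (collarRho ℓ s₀ ^ 2)⁻¹ * Real.exp (-t)
      = (2 * Real.pi * Real.cos (ℓ * r / (2 * Real.pi)) / ℓ * E) ^ 2 * E := hgoal_lhs
    _ ≤ Real.pi ^ 2 * E := mul_le_mul_of_nonneg_right hsq hE0.le
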